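/- arXiv:1806.08895 — 2 statements merged into one kernel-verified Lean document; each statement's English description precedes it below -/
import Mathlib

section
/- Let p ≥ 3 be a natural number, let G be a simple graph on a finite vertex type V with edge set E, and let P : V → Fin p be a hash function. Let m_in be the number of edges (u,v) ∈ E with P(u) = P(v) (inner edges) and m_out the number of edges with P(u) ≠ P(v) (outer edges). Then the total number of pairs (S, e), where S is a 3-element subset of Fin p and e = (u,v) ∈ E is a main edge of the subgraph indexed by S (i.e. both P(u) ∈ S and P(v) ∈ S), equals m_in · (p-1)(p-2)/2 + m_out · (p-2). In particular this total is at most m · (p-1)(p-2)/2 where m = m_in + m_out, so the total number of key-value pairs emitted across all reduce instances is O(mp²) in general and, when every edge is an outer edge, exactly m(p-2) = O(mp). (This is the exact counting identity behind Lemma 5, part 2.) -/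
open Finset

lemma count_supersets {α : Type*} [Fintype α] [DecidableEq α] (t : Finset α) (k : ℕ)
    (hk : t.card ≤ k) :
    (Finset.univ.filter fun S : Finset α => S.card = k ∧ t ⊆ S).card
      = (Fintype.card α - t.card).choose (k - t.card) := by
  rw [← Finset.card_compl t, ← Finset.card_powersetCard]
  apply Finset.card_nbij' (fun S => S \ t) (fun T => T ∪ t)
  · intro S hS
    simp only [coe_filter, Set.mem_setOf_eq, mem_filter, mem_univ, true_and] at hS
    simp only [Finset.mem_coe, Finset.mem_powersetCard]
    exact ⟨fun x hx => Finset.mem_compl.2 (Finset.mem_sdiff.1 hx).2,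
      by rw [Finset.card_sdiff_of_subset hS.2, hS.1]⟩
  · intro T hT
    simp only [Finset.mem_coe, Finset.mem_powersetCard] at hT
    have hd : Disjoint T t := Finset.disjoint_left.2 fun x hx ht =>
      (Finset.mem_compl.1 (hT.1 hx)) ht
    simp only [coe_filter, Set.mem_setOf_eq, mem_filter, mem_univ, true_and]
    constructor
    · rw [Finset.card_union_of_disjoint hd, hT.2]
      omega
    · exact Finset.subset_union_right
  · intro S hS
    simp only [coe_filter, Set.mem_setOf_eq, mem_filter, mem_univ, true_and] at hS
    exact Finset.sdiff_union_of_subset hS.2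
  · intro T hT
    simp only [Finset.mem_coe, Finset.mem_powersetCard] at hT
    have hd : Disjoint T t := Finset.disjoint_left.2 fun x hx ht =>
      (Finset.mem_compl.1 (hT.1 hx)) ht
    exact Finset.union_sdiff_cancel_right hd

lemma count_sym2 {p : ℕ} (hp : 3 ≤ p) (s : Sym2 (Fin p)) :
    (Finset.univ.filter fun S : Finset (Fin p) => S.card = 3 ∧ s ∈ S.sym2).card
      = if s.IsDiag then (p - 1) * (p - 2) / 2 else p - 2 := by
  induction s using Sym2.inductionOn with
  | hf a b =>
    by_cases hab : a = b
    · subst hab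
      simp only [Sym2.isDiag_iff_proj_eq, if_pos rfl]
      have : ∀ S : Finset (Fin p), (s(a, a) ∈ S.sym2) ↔ ({a} : Finset (Fin p)) ⊆ S := by
        intro S; rw [Finset.mk_mem_sym2_iff, Finset.singleton_subset_iff, and_self]
      simp_rw [this]
      rw [count_supersets {a} 3 (by simp)]
      simp [Fintype.card_fin, Nat.choose_two_right]
      have h : p - 1 - 1 = p - 2 := by omega
      rw [h]
    · simp only [Sym2.isDiag_iff_proj_eq, if_neg hab]
      have : ∀ S : Finset (Fin p), (s(a, b) ∈ S.sym2) ↔ ({a, b} : Finset (Fin p)) ⊆ S := by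
        intro S
        rw [Finset.mk_mem_sym2_iff, Finset.insert_subset_iff, Finset.singleton_subset_iff]
      simp_rw [this]
      rw [count_supersets {a, b} 3 (by simp [Finset.card_insert_of_notMem, hab])]
      rw [Finset.card_insert_of_notMem (by simp [hab]), Finset.card_singleton]
      simp [Fintype.card_fin, Nat.choose_one_right]

/-- Exact counting identity behind Lemma 5, part 2: the total number of pairs
`(S, e)` where `S` is a 3-element subset of `Fin p` and `e` is a main edge of
the subgraph indexed by `S` equals
`m_in · (p-1)(p-2)/2 + m_out · (p-2)`; in particular it is at most
`m · (p-1)(p-2)/2`, and it equals `m · (p-2)` when every edge is an outer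
edge. -/
theorem stmt_10 {p : ℕ} (hp : 3 ≤ p) {V : Type*} [Fintype V] [DecidableEq V]
    (G : SimpleGraph V) [DecidableRel G.Adj] (P : V → Fin p) :
    (∑ S ∈ Finset.univ.filter (fun S : Finset (Fin p) => S.card = 3),
        (G.edgeFinset.filter (fun e => e.map P ∈ S.sym2)).card)
      = (G.edgeFinset.filter (fun e => (e.map P).IsDiag)).card
          * ((p - 1) * (p - 2) / 2)
        + (G.edgeFinset.filter (fun e => ¬ (e.map P).IsDiag)).card * (p - 2)
    ∧ (∑ S ∈ Finset.univ.filter (fun S : Finset (Fin p) => S.card = 3),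
        (G.edgeFinset.filter (fun e => e.map P ∈ S.sym2)).card)
      ≤ G.edgeFinset.card * ((p - 1) * (p - 2) / 2)
    ∧ ((∀ e ∈ G.edgeFinset, ¬ (e.map P).IsDiag) →
        (∑ S ∈ Finset.univ.filter (fun S : Finset (Fin p) => S.card = 3),
          (G.edgeFinset.filter (fun e => e.map P ∈ S.sym2)).card)
        = G.edgeFinset.card * (p - 2)) := by
  have swap : (∑ S ∈ Finset.univ.filter (fun S : Finset (Fin p) => S.card = 3),
        (G.edgeFinset.filter (fun e => e.map P ∈ S.sym2)).card)
      = ∑ e ∈ G.edgeFinset,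
          (if (e.map P).IsDiag then (p - 1) * (p - 2) / 2 else p - 2) := by
    simp_rw [Finset.card_filter]
    rw [Finset.sum_comm]
    apply Finset.sum_congr rfl
    intro e _
    rw [← count_sym2 hp (e.map P), Finset.sum_filter, Finset.card_filter]
    apply Finset.sum_congr rfl
    intro S _
    by_cases h1 : S.card = 3 <;> by_cases h2 : Sym2.map P e ∈ S.sym2 <;> simp [h1, h2]
  have main : (∑ S ∈ Finset.univ.filter (fun S : Finset (Fin p) => S.card = 3),
        (G.edgeFinset.filter (fun e => e.map P ∈ S.sym2)).card)
      = (G.edgeFinset.filter (fun e => (e.map P).IsDiag)).card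
          * ((p - 1) * (p - 2) / 2)
        + (G.edgeFinset.filter (fun e => ¬ (e.map P).IsDiag)).card * (p - 2) := by
    rw [swap, Finset.sum_ite, Finset.sum_const, Finset.sum_const, smul_eq_mul, smul_eq_mul]
  refine ⟨main, ?_, ?_⟩
  · rw [main]
    have hle : p - 2 ≤ (p - 1) * (p - 2) / 2 := by
      have : 2 * (p - 2) ≤ (p - 1) * (p - 2) := Nat.mul_le_mul_right _ (by omega)
      calc p - 2 = 2 * (p - 2) / 2 := by omega
        _ ≤ (p - 1) * (p - 2) / 2 := Nat.div_le_div_right this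
    have hcard := Finset.card_filter_add_card_filter_not
      (s := G.edgeFinset) (p := fun e => (e.map P).IsDiag)
    calc _ ≤ (G.edgeFinset.filter (fun e => (e.map P).IsDiag)).card
          * ((p - 1) * (p - 2) / 2)
        + (G.edgeFinset.filter (fun e => ¬ (e.map P).IsDiag)).card
          * ((p - 1) * (p - 2) / 2) :=
          Nat.add_le_add_left (Nat.mul_le_mul_left _ hle) _
      _ = G.edgeFinset.card * ((p - 1) * (p - 2) / 2) := by
          rw [← Nat.add_mul, hcard]
  · intro h
    rw [main, Finset.filter_false_of_mem h, Finset.filter_true_of_mem h]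
    simp
end

section
/- Let G be a simple graph on a finite vertex type V with n = |V| ≥ 2 vertices and m edges. Then the sum over all vertices u of the square of the degree of u satisfies ∑_{u ∈ V} deg(u)² ≤ m · (2m/(n-1) + n - 2), where the inequality is between real numbers. (This is the upper bound on the sum of squared degrees, used in the complexity analysis of the DecGP algorithm to bound the work of computing common and exclusive interactions in each subgraph.) -/
open Finset

universe u

private lemma deg_as_sum {V : Type*} [Fintype V] [DecidableEq V] (G : SimpleGraph V)
    [DecidableRel G.Adj] (v : V) :
    (G.degree v : ℝ) = ∑ w : V, if G.Adj v w then (1:ℝ) else 0 := by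
  rw [← SimpleGraph.card_neighborFinset_eq_degree, SimpleGraph.neighborFinset_eq_filter,
    Finset.card_filter]
  push_cast
  rfl

private lemma sum_ne_aux {V : Type*} [Fintype V] [DecidableEq V] (z : V) (f : V → ℝ) :
    ∑ u : {x : V // x ≠ z}, f u.val = ∑ v : V, f v - f z := by
  rw [eq_sub_iff_add_eq]
  rw [← Finset.sum_subtype (univ.erase z) (fun x => by simp) f]
  exact Finset.sum_erase_add _ _ (mem_univ z)


private lemma key_poly (n m d t : ℝ) (h1 : 0 ≤ 2*m - n*d) (h2 : 0 ≤ n-1-d)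
    (h3 : 0 ≤ (n-1)*(n-2) - 2*(m-d)) (h4 : 0 ≤ d*(n-1) - t)
    (h5 : 0 ≤ 2*m + d*(d-1) - 2*t) (h6 : 0 ≤ d - 1) :
    0 ≤ (2*m^2*(n-2) + m*(n-2)^2*(n-1)) -
      (2*(m-d)^2*(n-1) + ((m-d)*(n-3) + d^2 + 2*t - d)*((n-1)*(n-2))) := by
  have p1 := mul_nonneg (mul_nonneg h1 h2) h6
  have p2 := mul_nonneg (mul_nonneg h1 h6) h6
  have p3 := mul_nonneg (mul_nonneg h4 h2) h6
  have p4 := mul_nonneg (mul_nonneg h4 h6) h6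
  have p5 := mul_nonneg (mul_nonneg h5 h2) h6
  have p6 := mul_nonneg (mul_nonneg h5 h6) h6
  have p7 := mul_nonneg h1 h4
  have p8 := mul_nonneg h1 h6
  have p9 := mul_nonneg h2 h5
  have p10 := mul_nonneg h3 h4
  have p11 := mul_nonneg h3 h5
  have p12 := mul_nonneg h5 h6
  linarith

private lemma key_div (n m d t : ℝ) (hn : 3 ≤ n) (h1 : 0 ≤ 2*m - n*d) (h2 : 0 ≤ n-1-d)
    (h3 : 0 ≤ (n-1)*(n-2) - 2*(m-d)) (h4 : 0 ≤ d*(n-1) - t)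
    (h5 : 0 ≤ 2*m + d*(d-1) - 2*t) (h6 : 0 ≤ d - 1) :
    2*(m-d)^2/(n-2) + (m-d)*(n-3) + d^2 + 2*t - d ≤ 2*m^2/(n-1) + m*(n-2) := by
  have ha : (0:ℝ) < n - 1 := by linarith
  have hb : (0:ℝ) < n - 2 := by linarith
  have hpoly := key_poly n m d t h1 h2 h3 h4 h5 h6
  have hid : (2*m^2/(n-1) + m*(n-2)) - (2*(m-d)^2/(n-2) + (m-d)*(n-3) + d^2 + 2*t - d)
      = ((2*m^2*(n-2) + m*(n-2)^2*(n-1)) -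
        (2*(m-d)^2*(n-1) + ((m-d)*(n-3) + d^2 + 2*t - d)*((n-1)*(n-2)))) / ((n-1)*(n-2)) := by
    field_simp
    ring
  have hdiv := div_nonneg hpoly (le_of_lt (mul_pos ha hb))
  linarith [hid ▸ hdiv]

private lemma key_zero (n m : ℝ) (hn : 3 ≤ n) (hm : 0 ≤ m) (h3 : 2*m ≤ (n-1)*(n-2)) :
    2*m^2/(n-2) + m*(n-3) ≤ 2*m^2/(n-1) + m*(n-2) := by
  have ha : (0:ℝ) < n - 1 := by linarith
  have hb : (0:ℝ) < n - 2 := by linarith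
  rw [div_add' _ _ _ hb.ne', div_add' _ _ _ ha.ne', div_le_div_iff₀ hb ha]
  nlinarith [mul_nonneg hm (sub_nonneg.2 h3)]

set_option maxHeartbeats 1000000 in
private lemma decaen_aux (n : ℕ) {V : Type u} [Fintype V] [DecidableEq V] (G : SimpleGraph V)
    [DecidableRel G.Adj] (hcard : Fintype.card V = n) (hn2 : 2 ≤ n) :
    ∑ u : V, (G.degree u : ℝ)^2
      ≤ 2*(G.edgeFinset.card:ℝ)^2/((n:ℝ)-1) + (G.edgeFinset.card:ℝ)*((n:ℝ)-2) := by
  induction n using Nat.strong_induction_on generalizing V with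
  | _ n ih =>
  rcases eq_or_lt_of_le hn2 with hbase | hstep
  · -- n = 2
    subst hbase
    have handshake : ∑ v : V, (G.degree v : ℝ) = 2 * (G.edgeFinset.card : ℝ) := by
      exact_mod_cast congrArg (Nat.cast : ℕ → ℝ) (G.sum_degrees_eq_twice_card_edges)
    have hd : ∀ u : V, (G.degree u : ℝ)^2 = (G.degree u : ℝ) := by
      intro u
      have h := G.degree_lt_card_verts u
      rw [hcard] at h
      have : G.degree u = 0 ∨ G.degree u = 1 := by omega
      rcases this with h | h <;> rw [h] <;> norm_num
    rw [Finset.sum_congr rfl (fun u _ => hd u), handshake]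
    have hsq : (G.edgeFinset.card : ℝ) ≤ (G.edgeFinset.card : ℝ)^2 := by
      exact_mod_cast Nat.le_self_pow two_ne_zero (G.edgeFinset.card)
    have h2 : ((2:ℕ):ℝ) = 2 := by norm_num
    rw [h2, show (2:ℝ)-1 = 1 by norm_num, div_one, show (2:ℝ)-2 = 0 by norm_num,
      mul_zero, add_zero]
    linarith
  · -- 3 ≤ n
    have hn3 : 3 ≤ n := hstep
    -- minimum degree vertex
    have hne : (univ : Finset V).Nonempty := by
      rw [← Finset.card_pos, Finset.card_univ, hcard]; omega
    obtain ⟨z, -, hz⟩ := Finset.exists_min_image (univ : Finset V) (fun v => G.degree v) hne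
    simp only [mem_univ, forall_true_left] at hz
    -- induced subgraph on vertices ≠ z
    let G' : SimpleGraph {x : V // x ≠ z} := SimpleGraph.comap Subtype.val G
    haveI : DecidableRel G'.Adj := fun a b => (inferInstance : DecidableRel G.Adj) a.val b.val
    have hcard' : Fintype.card {x : V // x ≠ z} = n - 1 := by
      rw [← hcard]
      exact Fintype.card_subtype_compl (· = z) ▸ by simp [Fintype.card_subtype_eq]
    -- notation
    set m : ℝ := (G.edgeFinset.card : ℝ) with hm_def
    set m' : ℝ := (G'.edgeFinset.card : ℝ) with hm'_def
    set δ : ℝ := (G.degree z : ℝ) with hδ_def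
    set S : V → ℝ := fun v => if G.Adj z v then (1:ℝ) else 0 with hS_def
    set t : ℝ := ∑ v : V, (G.degree v : ℝ) * S v with ht_def
    have hS01 : ∀ v, 0 ≤ S v ∧ S v ≤ 1 := fun v => by
      simp only [hS_def]; split_ifs <;> norm_num
    have hSz : S z = 0 := by simp [hS_def]
    have hSsq : ∀ v, S v * S v = S v := fun v => by
      simp only [hS_def]; split_ifs <;> norm_num
    have F1 : ∑ v : V, (G.degree v : ℝ) = 2 * m := by
      rw [hm_def]
      exact_mod_cast congrArg (Nat.cast : ℕ → ℝ) (G.sum_degrees_eq_twice_card_edges)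
    have F2 : ∑ v : V, S v = δ := (deg_as_sum G z).symm
    have F4 : ∀ u : {x : V // x ≠ z}, (G'.degree u : ℝ) = (G.degree u.val : ℝ) - S u.val := by
      intro u
      rw [deg_as_sum G' u]
      have : ∀ a b : {x : V // x ≠ z}, G'.Adj a b ↔ G.Adj a.val b.val := fun a b => Iff.rfl
      calc (∑ w : {x : V // x ≠ z}, if G'.Adj u w then (1:ℝ) else 0)
          = ∑ w : {x : V // x ≠ z}, (fun v => if G.Adj u.val v then (1:ℝ) else 0) w.val :=
            Finset.sum_congr rfl (fun w _ => if_congr SimpleGraph.comap_adj rfl rfl)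
        _ = (∑ v : V, if G.Adj u.val v then (1:ℝ) else 0) - (if G.Adj u.val z then (1:ℝ) else 0) :=
            sum_ne_aux z (fun v => if G.Adj u.val v then (1:ℝ) else 0)
        _ = (G.degree u.val : ℝ) - S u.val := by
            rw [← deg_as_sum]
            congr 1
            simp only [hS_def]
            exact if_congr (G.adj_comm _ _) rfl rfl
    have hSadj : ∀ v : V, (if G.Adj v z then (1:ℝ) else 0) = S v := by
      intro v; simp only [hS_def]; exact if_congr (G.adj_comm _ _) rfl rfl
    have F5 : ∑ u : {x : V // x ≠ z}, (G'.degree u : ℝ) = 2 * m' := by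
      rw [hm'_def]
      exact_mod_cast congrArg (Nat.cast : ℕ → ℝ) (G'.sum_degrees_eq_twice_card_edges)
    have hsum_deg' : ∑ u : {x : V // x ≠ z}, (G.degree u.val : ℝ) = 2 * m - δ := by
      have := sum_ne_aux z (fun v => (G.degree v : ℝ))
      rw [F1] at this; exact this
    have hsum_S' : ∑ u : {x : V // x ≠ z}, S u.val = δ := by
      have := sum_ne_aux z S
      rw [F2, hSz] at this; simpa using this
    have F6 : 2 * m' = 2 * m - 2 * δ := by
      rw [← F5, Finset.sum_congr rfl (fun u _ => F4 u), Finset.sum_sub_distrib, hsum_deg', hsum_S']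
      ring
    -- squares
    have F7 : ∑ u : V, (G.degree u : ℝ)^2
        = (∑ u : {x : V // x ≠ z}, (G'.degree u : ℝ)^2) + δ^2 + 2*t - δ := by
      have e1 : ∑ u : {x : V // x ≠ z}, (G'.degree u : ℝ)^2
          = ∑ u : {x : V // x ≠ z},
              (fun v => ((G.degree v : ℝ))^2 - 2*((G.degree v : ℝ))*S v + S v) u.val := by
        refine Finset.sum_congr rfl (fun u _ => ?_)
        rw [F4 u]
        have := hSsq u.val
        ring_nf
        nlinarith [hSsq u.val]
      rw [e1, sum_ne_aux z (fun v => ((G.degree v : ℝ))^2 - 2*((G.degree v : ℝ))*S v + S v)]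
      have e2 : ∑ v : V, (((G.degree v : ℝ))^2 - 2*((G.degree v : ℝ))*S v + S v)
          = (∑ v : V, ((G.degree v:ℝ))^2) - 2*t + δ := by
        rw [Finset.sum_add_distrib, Finset.sum_sub_distrib, F2, ht_def, Finset.mul_sum]
        ring_nf
      rw [e2, hSz]
      ring
    have hdeg_le : ∀ v : V, (G.degree v : ℝ) ≤ (n:ℝ) - 1 := by
      intro v
      have h := G.degree_lt_card_verts v
      rw [hcard] at h
      have : (G.degree v : ℕ) + 1 ≤ n := h
      have := (Nat.cast_le (α := ℝ)).2 this
      push_cast at this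
      linarith
    have F8 : t ≤ δ * ((n:ℝ) - 1) := by
      rw [ht_def]
      calc ∑ v : V, (G.degree v : ℝ) * S v ≤ ∑ v : V, ((n:ℝ)-1) * S v := by
            refine Finset.sum_le_sum (fun v _ => ?_)
            exact mul_le_mul_of_nonneg_right (hdeg_le v) (hS01 v).1
        _ = δ * ((n:ℝ)-1) := by rw [← Finset.mul_sum, F2]; ring
    have F10 : (n:ℝ) * δ ≤ 2 * m := by
      rw [← F1]
      have : ∀ v ∈ (univ : Finset V), δ ≤ (G.degree v : ℝ) := by
        intro v _
        rw [hδ_def]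
        exact (Nat.cast_le (α := ℝ)).2 (hz v)
      calc (n:ℝ) * δ = ∑ _v : V, δ := by
            rw [Finset.sum_const, Finset.card_univ, hcard, nsmul_eq_mul]
        _ ≤ ∑ v : V, (G.degree v : ℝ) := Finset.sum_le_sum this
    have F11 : 2 * (m - δ) ≤ ((n:ℝ)-1) * ((n:ℝ)-2) := by
      have hd' : ∀ u : {x : V // x ≠ z}, (G'.degree u : ℝ) ≤ (n:ℝ) - 2 := by
        intro u
        have h := G'.degree_lt_card_verts u
        rw [hcard'] at h
        have h2 : (G'.degree u : ℕ) + 1 ≤ n - 1 := h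
        have h3 : (G'.degree u : ℕ) + 2 ≤ n := by omega
        have := (Nat.cast_le (α := ℝ)).2 h3
        push_cast at this
        linarith
      have : 2 * m' ≤ ((n:ℝ)-1) * ((n:ℝ)-2) := by
        rw [← F5]
        calc ∑ u : {x : V // x ≠ z}, (G'.degree u : ℝ)
            ≤ ∑ _u : {x : V // x ≠ z}, ((n:ℝ)-2) := Finset.sum_le_sum (fun u _ => hd' u)
          _ = ((n:ℝ)-1) * ((n:ℝ)-2) := by
              rw [Finset.sum_const, Finset.card_univ, hcard', nsmul_eq_mul]
              congr 1
              push_cast [Nat.cast_sub (by omega : 1 ≤ n)]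
              ring
      linarith [F6]
    have F9 : 2 * t ≤ 2 * m + δ * (δ - 1) := by
      have ht2 : t = ∑ v : V, ∑ w : V, (if G.Adj v w then (1:ℝ) else 0) * S v := by
        rw [ht_def]
        refine Finset.sum_congr rfl (fun v _ => ?_)
        rw [deg_as_sum G v, Finset.sum_mul]
      have htswap : t = ∑ v : V, ∑ w : V, (if G.Adj v w then (1:ℝ) else 0) * S w := by
        rw [ht2, Finset.sum_comm]
        refine Finset.sum_congr rfl (fun v _ => Finset.sum_congr rfl (fun w _ => ?_))
        congr 1
        exact if_congr (G.adj_comm _ _) rfl rfl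
      set A : ℝ := ∑ v : V, ∑ w : V, (if G.Adj v w then (1:ℝ) else 0) * (S v * S w) with hA_def
      have hsum2m : ∑ v : V, ∑ w : V, (if G.Adj v w then (1:ℝ) else 0) = 2 * m := by
        rw [← F1]; exact Finset.sum_congr rfl (fun v _ => (deg_as_sum G v).symm)
      have h2t : 2 * t ≤ A + 2 * m := by
        have hpt : ∀ v w : V, (if G.Adj v w then (1:ℝ) else 0) * (S v + S w)
            ≤ (if G.Adj v w then (1:ℝ) else 0) * (S v * S w)
              + (if G.Adj v w then (1:ℝ) else 0) := by
          intro v w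
          obtain ⟨h1x, h2x⟩ := hS01 v
          obtain ⟨h1y, h2y⟩ := hS01 w
          split_ifs with h
          · nlinarith [mul_nonneg (sub_nonneg.2 h2x) (sub_nonneg.2 h2y)]
          · simp
        have e2t : 2 * t = ∑ v : V, ∑ w : V,
            (if G.Adj v w then (1:ℝ) else 0) * (S v + S w) := by
          have : (2:ℝ) * t = t + t := by ring
          rw [this]
          nth_rewrite 1 [ht2]
          nth_rewrite 1 [htswap]
          rw [← Finset.sum_add_distrib]
          refine Finset.sum_congr rfl (fun v _ => ?_)
          rw [← Finset.sum_add_distrib]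
          exact Finset.sum_congr rfl (fun w _ => by ring)
        rw [e2t, ← hsum2m]
        calc ∑ v : V, ∑ w : V, (if G.Adj v w then (1:ℝ) else 0) * (S v + S w)
            ≤ ∑ v : V, ∑ w : V, ((if G.Adj v w then (1:ℝ) else 0) * (S v * S w)
                + (if G.Adj v w then (1:ℝ) else 0)) :=
              Finset.sum_le_sum (fun v _ => Finset.sum_le_sum (fun w _ => hpt v w))
          _ = A + ∑ v : V, ∑ w : V, (if G.Adj v w then (1:ℝ) else 0) := by
              rw [hA_def, ← Finset.sum_add_distrib]
              exact Finset.sum_congr rfl (fun v _ => Finset.sum_add_distrib)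
      have hAbound : A ≤ δ * δ - δ := by
        have inner : ∀ v : V, ∑ w : V, (if G.Adj v w then (1:ℝ) else 0) * S w ≤ δ - S v := by
          intro v
          have hzero : (if G.Adj v v then (1:ℝ) else 0) * S v = 0 := by simp
          calc ∑ w : V, (if G.Adj v w then (1:ℝ) else 0) * S w
              = ∑ w ∈ univ.erase v, (if G.Adj v w then (1:ℝ) else 0) * S w :=
                (Finset.sum_erase (a := v)
                  (f := fun w => (if G.Adj v w then (1:ℝ) else 0) * S w) univ hzero).symm
            _ ≤ ∑ w ∈ univ.erase v, S w := by
                refine Finset.sum_le_sum (fun w _ => ?_)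
                obtain ⟨h1, h2⟩ := hS01 w
                split_ifs
                · simp
                · simpa using h1
            _ = δ - S v := by rw [Finset.sum_erase_eq_sub (mem_univ v), F2]
        calc A = ∑ v : V, S v * (∑ w : V, (if G.Adj v w then (1:ℝ) else 0) * S w) := by
              rw [hA_def]
              refine Finset.sum_congr rfl (fun v _ => ?_)
              rw [Finset.mul_sum]
              exact Finset.sum_congr rfl (fun w _ => by ring)
          _ ≤ ∑ v : V, S v * (δ - S v) :=
              Finset.sum_le_sum (fun v _ => mul_le_mul_of_nonneg_left (inner v) (hS01 v).1)
          _ = δ * δ - δ := by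
              have : ∀ v, S v * (δ - S v) = S v * δ - S v := fun v => by
                rw [mul_sub, hSsq]
              rw [Finset.sum_congr rfl (fun v _ => this v), Finset.sum_sub_distrib,
                ← Finset.sum_mul, F2]
      linarith
    -- apply the induction hypothesis to G'
    have hIH := ih (n-1) (by omega) G' hcard' (by omega)
    have hcast : ((n-1 : ℕ) : ℝ) = (n:ℝ) - 1 := by
      push_cast [Nat.cast_sub (by omega : 1 ≤ n)]
      ring
    rw [hcast] at hIH
    have hm'2 : m' = m - δ := by linarith [F6]
    have hIH' : ∑ u : {x : V // x ≠ z}, (G'.degree u : ℝ)^2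
        ≤ 2*(m - δ)^2/((n:ℝ)-2) + (m - δ)*((n:ℝ)-3) := by
      rw [← hm'2]
      calc ∑ u : {x : V // x ≠ z}, (G'.degree u : ℝ)^2
          ≤ 2*m'^2/(((n:ℝ)-1)-1) + m'*(((n:ℝ)-1)-2) := hIH
        _ = 2*m'^2/((n:ℝ)-2) + m'*((n:ℝ)-3) := by ring_nf
    have hm0 : (0:ℝ) ≤ m := by rw [hm_def]; exact Nat.cast_nonneg _
    have hn3' : (3:ℝ) ≤ (n:ℝ) := by exact_mod_cast hn3
    have htn : 0 ≤ t := by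
      rw [ht_def]
      exact Finset.sum_nonneg (fun v _ => mul_nonneg (Nat.cast_nonneg _) (hS01 v).1)
    clear_value m m' δ S t
    rw [F7]
    rcases Nat.eq_zero_or_pos (G.degree z) with hδ0 | hδ1
    · -- isolated minimum-degree vertex
      have hδ0' : δ = 0 := by rw [hδ_def, hδ0]; norm_num
      have ht0 : t = 0 := by
        have h := F8
        rw [hδ0'] at h
        have h2 : t ≤ 0 := by linarith [h]
        exact le_antisymm h2 htn
      have hkz := key_zero (n:ℝ) m hn3' hm0 (by linarith [F11, hδ0'])
      rw [hδ0', ht0]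
      rw [hδ0'] at hIH'
      have hIH'' : ∑ u : {x : V // x ≠ z}, (G'.degree u : ℝ)^2
          ≤ 2*m^2/((n:ℝ)-2) + m*((n:ℝ)-3) := by
        calc ∑ u : {x : V // x ≠ z}, (G'.degree u : ℝ)^2
            ≤ 2*(m-0)^2/((n:ℝ)-2) + (m-0)*((n:ℝ)-3) := hIH'
          _ = 2*m^2/((n:ℝ)-2) + m*((n:ℝ)-3) := by ring_nf
      linarith [hIH'', hkz]
    · have hδ1' : (1:ℝ) ≤ δ := by
        rw [hδ_def]; exact_mod_cast hδ1
      have hkey := key_div (n:ℝ) m δ t hn3'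
        (by linarith [F10]) (by linarith [hdeg_le z]) (by linarith [F11])
        (by linarith [F8]) (by linarith [F9]) (by linarith [hδ1'])
      linarith [hIH', hkey]

/-- de Caen's bound, used in the complexity analysis of DecGP: for a finite
simple graph with `n ≥ 2` vertices and `m` edges,
`∑_u deg(u)² ≤ m · (2m/(n-1) + n - 2)`. -/
theorem stmt_12 {V : Type*} [Fintype V] [DecidableEq V] (G : SimpleGraph V)
    [DecidableRel G.Adj] (hn : 2 ≤ Fintype.card V) :
    ∑ u : V, (G.degree u : ℝ) ^ 2
      ≤ (G.edgeFinset.card : ℝ) *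
          (2 * (G.edgeFinset.card : ℝ) / ((Fintype.card V : ℝ) - 1)
            + (Fintype.card V : ℝ) - 2) := by
  calc ∑ u : V, (G.degree u : ℝ) ^ 2
      ≤ 2*(G.edgeFinset.card:ℝ)^2/((Fintype.card V : ℝ)-1)
        + (G.edgeFinset.card:ℝ)*((Fintype.card V : ℝ)-2) :=
        decaen_aux (Fintype.card V) G rfl hn
    _ = (G.edgeFinset.card : ℝ) *
          (2 * (G.edgeFinset.card : ℝ) / ((Fintype.card V : ℝ) - 1)
            + (Fintype.card V : ℝ) - 2) := by ring
end
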